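/- arXiv:2303.16961 — 3 statements merged into one kernel-verified Lean document; each statement's English description precedes it below -/
import Mathlib

section
/- Let G be a group and let n ≥ 0. Suppose H and K are subgroups of G with H ≤ K, and both H and K are virtually ℤ^n (for the same n). Then H has finite index in K; in particular, H and K are commensurable. -/
/-- A subgroup is *virtually ℤⁿ* if it has a finite-index subgroup isomorphic to the
free abelian group of rank `n`. -/
def IsVirtuallyZn {G : Type*} [Group G] (H : Subgroup G) (n : ℕ) : Prop :=
  ∃ V : Subgroup H, V.FiniteIndex ∧ Nonempty (V ≃* Multiplicative (Fin n → ℤ))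

/-- In a group isomorphic to `ℤⁿ`, a subgroup has finite index iff it is itself
isomorphic to `ℤⁿ`. -/
lemma index_ne_zero_iff_of_equiv {P : Type*} [Group P] {n : ℕ}
    (e : P ≃* Multiplicative (Fin n → ℤ)) (C : Subgroup P) :
    C.index ≠ 0 ↔ Nonempty (C ≃* Multiplicative (Fin n → ℤ)) := by
  let f : P ≃* (Fin n → Multiplicative ℤ) := e.trans (MulEquiv.funMultiplicative _ _)
  have hidx : C.index = (C.map (f : P →* (Fin n → Multiplicative ℤ))).index := by
    have hinj : Function.Injective (f : P →* (Fin n → Multiplicative ℤ)) := f.injective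
    conv_lhs => rw [← Subgroup.comap_map_eq_self_of_injective hinj C]
    exact Subgroup.index_comap_of_surjective _ f.surjective
  rw [hidx, Int.subgroup_index_ne_zero_iff]
  have eC : C ≃* (C.map (f : P →* (Fin n → Multiplicative ℤ))) := f.subgroupMap C
  have em : (Fin n → Multiplicative ℤ) ≃* Multiplicative (Fin n → ℤ) :=
    (MulEquiv.funMultiplicative _ _).symm
  exact ⟨fun ⟨g⟩ ↦ ⟨(eC.trans g).trans em⟩, fun ⟨g⟩ ↦ ⟨(eC.symm.trans g).trans em.symm⟩⟩

theorem finiteIndex_of_le_of_virtuallyZn {G : Type*} [Group G] (n : ℕ)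
    (H K : Subgroup G) (hHK : H ≤ K)
    (hH : IsVirtuallyZn H n) (hK : IsVirtuallyZn K n) :
    (H.subgroupOf K).FiniteIndex ∧ Subgroup.Commensurable H K := by
  obtain ⟨A, hAfin, ⟨eA⟩⟩ := hH
  obtain ⟨B, hBfin, ⟨eB⟩⟩ := hK
  -- view `A` as a subgroup of `K`
  have hmapleH : A.map H.subtype ≤ H := by
    rintro x ⟨a, _, rfl⟩; exact a.2
  set A' : Subgroup K := (A.map H.subtype).subgroupOf K with hA'def
  have eA' : A' ≃* Multiplicative (Fin n → ℤ) :=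
    ((Subgroup.subgroupOfEquivOfLe (hmapleH.trans hHK)).trans
      (A.equivMapOfInjective H.subtype H.subtype_injective).symm).trans eA
  -- `B ⊓ A'` has finite index in `A'`, hence is isomorphic to ℤⁿ
  haveI := hBfin
  haveI : (B.subgroupOf A').FiniteIndex := Subgroup.instFiniteIndex_subgroupOf B A'
  obtain ⟨eD⟩ : Nonempty ((B.subgroupOf A') ≃* Multiplicative (Fin n → ℤ)) :=
    (index_ne_zero_iff_of_equiv eA' (B.subgroupOf A')).mp Subgroup.FiniteIndex.index_ne_zero
  -- hence `A' ⊓ B` is isomorphic to ℤⁿ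
  have eInf : ((A' ⊓ B : Subgroup K)) ≃* Multiplicative (Fin n → ℤ) := by
    refine ((Subgroup.subgroupOfEquivOfLe (inf_le_left : A' ⊓ B ≤ A')).symm.trans ?_).trans eD
    exact MulEquiv.subgroupCongr (by rw [Subgroup.inf_subgroupOf_left])
  -- so `A' ⊓ B` has finite index in `B`
  have h1 : ((A' ⊓ B).subgroupOf B).index ≠ 0 :=
    (index_ne_zero_iff_of_equiv eB ((A' ⊓ B).subgroupOf B)).mpr
      ⟨(Subgroup.subgroupOfEquivOfLe (inf_le_right : A' ⊓ B ≤ B)).trans eInf⟩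
  -- hence `A' ⊓ B` has finite index in `K`
  have h2 : (A' ⊓ B : Subgroup K).index ≠ 0 := by
    have := Subgroup.relIndex_mul_index (inf_le_right : A' ⊓ B ≤ B)
    rw [← this]
    exact mul_ne_zero h1 hBfin.index_ne_zero
  -- finally `A' ⊓ B ≤ H.subgroupOf K`
  have hle : (A' ⊓ B : Subgroup K) ≤ H.subgroupOf K :=
    le_trans inf_le_left (fun x hx ↦ hmapleH hx)
  have hfin : (H.subgroupOf K).index ≠ 0 :=
    fun h0 ↦ h2 (Nat.eq_zero_of_zero_dvd (h0 ▸ Subgroup.index_dvd_of_le hle))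
  refine ⟨⟨hfin⟩, hfin, ?_⟩
  rw [Subgroup.relIndex, Subgroup.subgroupOf_eq_top.mpr hHK, Subgroup.index_top]
  exact one_ne_zero
end

section
/- Let b ≥ 1 be a natural number and consider a central extension of groups 1 → ℤ^b → G →θ→ Q → 1, i.e. θ : G → Q is a surjective homomorphism whose kernel is central in G and isomorphic to the free abelian group ℤ^b. Suppose that for every finitely generated free abelian subgroup A of Q there is a finite-index subgroup A' of A such that N_Q[A'] = N_Q(A'). Then for every finitely generated free abelian subgroup H of G there is a subgroup L of G such that L is commensurable with H and N_G[L] = N_G(L). -/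
open scoped DirectSum

open Subgroup Pointwise

-- (E) pow lemma
lemma aux_pow_mem_of_relIndex_ne_zero {G : Type*} [Group G] {X U : Subgroup G} {x : G}
    (hx : x ∈ X) (h : U.relIndex X ≠ 0) : ∃ j : ℕ, 0 < j ∧ x ^ j ∈ U := by
  have hfin : Finite (↥X ⧸ U.subgroupOf X) := by
    rw [Subgroup.relIndex, Subgroup.index] at h
    exact (Nat.card_ne_zero.mp h).2
  have : ¬ Function.Injective
      (fun n : ℕ => (QuotientGroup.mk ((⟨x, hx⟩ : ↥X) ^ n) : ↥X ⧸ U.subgroupOf X)) :=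
    fun hinj => (Finite.of_injective _ hinj).false
  rw [Function.not_injective_iff] at this
  obtain ⟨a, b, hab, hne⟩ := this
  rcases Nat.lt_or_ge a b with hlt | hge
  · refine ⟨b - a, by omega, ?_⟩
    have := (QuotientGroup.eq).mp hab
    have h2 : ((⟨x, hx⟩ : ↥X) ^ a)⁻¹ * (⟨x, hx⟩ : ↥X) ^ b ∈ U.subgroupOf X := this
    rw [Subgroup.mem_subgroupOf] at h2
    have h3 : ((⟨x, hx⟩ : ↥X) ^ a)⁻¹ * (⟨x, hx⟩ : ↥X) ^ b = (⟨x, hx⟩ : ↥X) ^ (b - a) := by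
      rw [inv_mul_eq_iff_eq_mul, ← pow_add]
      congr 1; omega
    rw [h3] at h2
    exact h2
  · have hlt : b < a := by omega
    refine ⟨a - b, by omega, ?_⟩
    have := (QuotientGroup.eq).mp hab.symm
    have h2 : ((⟨x, hx⟩ : ↥X) ^ b)⁻¹ * (⟨x, hx⟩ : ↥X) ^ a ∈ U.subgroupOf X := this
    rw [Subgroup.mem_subgroupOf] at h2
    have h3 : ((⟨x, hx⟩ : ↥X) ^ b)⁻¹ * (⟨x, hx⟩ : ↥X) ^ a = (⟨x, hx⟩ : ↥X) ^ (a - b) := by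
      rw [inv_mul_eq_iff_eq_mul, ← pow_add]
      congr 1; omega
    rw [h3] at h2
    exact h2

-- conj membership helper
lemma aux_mem_conj {G : Type*} [Group G] (g x : G) (L : Subgroup G) :
    x ∈ ConjAct.toConjAct g • L ↔ g⁻¹ * x * g ∈ L := by
  rw [Subgroup.mem_pointwise_smul_iff_inv_smul_mem, ← ConjAct.toConjAct_inv, ConjAct.smul_def,
    ConjAct.ofConjAct_toConjAct, inv_inv]

lemma aux_conj_pow_pow {G : Type*} [Group G] {c x y : G}
    (hc : ∀ z : G, Commute c z) (hxyc : x * y * x⁻¹ = c * y) :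
    ∀ a m : ℕ, x ^ a * y ^ m * (x ^ a)⁻¹ = c ^ (a * m) * y ^ m := by
  have step2 : ∀ m : ℕ, x * y ^ m * x⁻¹ = c ^ m * y ^ m := by
    intro m
    rw [← conj_pow, hxyc, (hc y).mul_pow]
  intro a m
  induction a with
  | zero => simp
  | succ a ih =>
    have h1 : x ^ (a + 1) = x * x ^ a := by rw [pow_succ']
    calc x ^ (a+1) * y ^ m * (x ^ (a+1))⁻¹
        = x * (x ^ a * y ^ m * (x ^ a)⁻¹) * x⁻¹ := by rw [h1]; group
      _ = x * (c ^ (a * m) * y ^ m) * x⁻¹ := by rw [ih]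
      _ = c ^ (a * m) * (x * y ^ m * x⁻¹) := by
            rw [← mul_assoc, ((hc x).pow_left (a*m)).symm.eq]; group
      _ = c ^ (a * m) * (c ^ m * y ^ m) := by rw [step2]
      _ = c ^ ((a+1) * m) * y ^ m := by rw [← mul_assoc, ← pow_add]; ring_nf

lemma aux_comm_of_powers {G : Type*} [Group G] {x y : G} {a m : ℕ}
    (ha : 0 < a) (hm : 0 < m)
    (c_def : ∀ z : G, Commute (x * y * x⁻¹ * y⁻¹) z)
    (hpow : x ^ a * y ^ m = y ^ m * x ^ a)
    (htf : ∀ k : ℕ, 0 < k → (x * y * x⁻¹ * y⁻¹) ^ k = 1 → x * y * x⁻¹ * y⁻¹ = 1) :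
    x * y = y * x := by
  set c := x * y * x⁻¹ * y⁻¹ with hc
  have hxyc : x * y * x⁻¹ = c * y := by rw [hc]; group
  have key := aux_conj_pow_pow c_def hxyc a m
  have h2 : x ^ a * y ^ m * (x ^ a)⁻¹ = y ^ m := by rw [hpow]; group
  rw [h2] at key
  have hcpow : c ^ (a * m) = 1 := by
    have : c ^ (a * m) * y ^ m = 1 * y ^ m := by rw [one_mul, ← key]
    exact mul_right_cancel this
  have hc1 : c = 1 := htf (a * m) (Nat.mul_pos ha hm) hcpow
  have : x * y * x⁻¹ * y⁻¹ = 1 := hc1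
  calc x * y = (x * y * x⁻¹ * y⁻¹) * (y * x) := by group
    _ = y * x := by rw [this, one_mul]

-- (B) subgroups of fg comm groups are fg
lemma aux_fg_subgroup {M : Type*} [CommGroup M] [Group.FG M] (P : Subgroup M) :
    Group.FG ↥P := by
  have hfm : Module.Finite ℤ (Additive M) := Module.Finite.iff_addGroup_fg.mpr inferInstance
  have hn : IsNoetherian ℤ (Additive M) := isNoetherian_of_isNoetherianRing_of_finite ℤ _
  set Pa : AddSubgroup (Additive M) := Subgroup.toAddSubgroup P with hPa
  have hsub : (AddSubgroup.toIntSubmodule Pa).FG := IsNoetherian.noetherian _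
  have hPaFG : Pa.FG := by
    have := (Submodule.fg_iff_addSubgroup_fg (AddSubgroup.toIntSubmodule Pa)).mp hsub
    rwa [AddSubgroup.toIntSubmodule_toAddSubgroup] at this
  have : P.FG := (Subgroup.fg_iff_add_fg P).mpr hPaFG
  exact (Group.fg_iff_subgroup_fg P).mpr this

-- (A) nested subgroups: N ≤ M, elements of M commute, M fg => N fg
lemma aux_fg_subgroup_of_le {G : Type*} [Group G] {M N : Subgroup G} (hle : N ≤ M)
    (hcomm : ∀ x y : G, x ∈ M → y ∈ M → x * y = y * x) (hfg : Group.FG ↥M) :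
    Group.FG ↥N := by
  letI : CommGroup ↥M :=
    { (inferInstance : Group ↥M) with
      mul_comm := fun a b => Subtype.ext (hcomm a b a.2 b.2) }
  haveI : Group.FG ↥M := hfg
  have h1 : Group.FG ↥(N.subgroupOf M) := aux_fg_subgroup _
  exact Group.fg_of_surjective (f := (Subgroup.subgroupOfEquivOfLe hle).toMonoidHom)
    (Subgroup.subgroupOfEquivOfLe hle).surjective

-- (C) extension of fg by fg is fg
lemma aux_fg_of_ker_range {G' Q' : Type*} [Group G'] [Group Q'] (f : G' →* Q')
    (hker : Group.FG ↥f.ker) (hrange : Group.FG ↥f.range) : Group.FG G' := by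
  obtain ⟨S, hS, hSfin⟩ := (Subgroup.fg_iff f.ker).mp ((Group.fg_iff_subgroup_fg f.ker).mp hker)
  obtain ⟨T, hT, hTfin⟩ :=
    (Subgroup.fg_iff f.range).mp ((Group.fg_iff_subgroup_fg f.range).mp hrange)
  have hTmem : ∀ t ∈ T, ∃ g : G', f g = t := by
    intro t ht
    have : t ∈ f.range := hT ▸ Subgroup.subset_closure ht
    exact this
  classical
  choose g hg using fun (t : T) => hTmem t t.2
  set T' : Set G' := Set.range g with hT'
  have hT'fin : T'.Finite := by
    haveI : Finite T := hTfin
    exact Set.finite_range g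
  have himg : f '' T' = T := by
    ext q
    constructor
    · rintro ⟨w, ⟨t, rfl⟩, rfl⟩
      rw [hg t]; exact t.2
    · rintro hq
      exact ⟨g ⟨q, hq⟩, ⟨⟨q, hq⟩, rfl⟩, hg _⟩
  rw [Group.fg_iff]
  refine ⟨S ∪ T', ?_, hSfin.union hT'fin⟩
  rw [eq_top_iff]
  intro x _
  have hfx : f x ∈ Subgroup.map f (Subgroup.closure T') := by
    rw [MonoidHom.map_closure, himg, hT]
    exact ⟨x, rfl⟩
  obtain ⟨w, hw, hfw⟩ := hfx
  have hker' : x * w⁻¹ ∈ f.ker := by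
    rw [MonoidHom.mem_ker, map_mul, map_inv, hfw, mul_inv_cancel]
  have h1 : x * w⁻¹ ∈ Subgroup.closure (S ∪ T') :=
    Subgroup.closure_mono Set.subset_union_left (hS ▸ hker' : x * w⁻¹ ∈ Subgroup.closure S)
  have h2 : w ∈ Subgroup.closure (S ∪ T') :=
    Subgroup.closure_mono Set.subset_union_right hw
  have : (x * w⁻¹) * w ∈ Subgroup.closure (S ∪ T') := mul_mem h1 h2
  simpa using this

-- (D) finite index from fg + torsion quotient
lemma aux_index_ne_zero {M : Type*} [CommGroup M] [Group.FG M] (U : Subgroup M)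
    (h : ∀ x : M, ∃ k : ℕ, 0 < k ∧ x ^ k ∈ U) : U.index ≠ 0 := by
  haveI : U.Normal := inferInstance
  have htor : Monoid.IsTorsion (M ⧸ U) := by
    intro q
    induction q using QuotientGroup.induction_on with
    | _ x =>
      obtain ⟨k, hk, hxk⟩ := h x
      refine isOfFinOrder_iff_pow_eq_one.mpr ⟨k, hk, ?_⟩
      have : ((x : M ⧸ U) ^ k : M ⧸ U) = ((x ^ k : M) : M ⧸ U) := by
        rw [← QuotientGroup.mk_pow]
      rw [this, QuotientGroup.eq_one_iff]
      exact hxk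
  have hfin : Finite (M ⧸ U) := CommGroup.finite_of_fg_torsion _ htor
  have : U.index = Nat.card (M ⧸ U) := rfl
  rw [this]
  exact Nat.card_ne_zero.mpr ⟨⟨1⟩, hfin⟩

lemma aux_free_cofinite_subgroup (M : Type*) [CommGroup M] [Group.FG M] :
    ∃ (N : Subgroup M) (k : ℕ), (∀ x : M, ∃ j : ℕ, 0 < j ∧ x ^ j ∈ N) ∧
      Nonempty (↥N ≃* Multiplicative (Fin k → ℤ)) := by
  classical
  obtain ⟨n, ι, hι, p, hp, ex, ⟨e⟩⟩ :=
    AddCommGroup.equiv_free_prod_directSum_zmod (Additive M)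
  haveI : ∀ i : ι, NeZero (p i ^ ex i) :=
    fun i => ⟨pow_ne_zero _ (hp i).ne_zero⟩
  haveI : Finite (⨁ i : ι, ZMod (p i ^ ex i)) :=
    Finite.of_equiv _ DFinsupp.equivFunOnFintype.symm
  set T : AddSubgroup ((Fin n →₀ ℤ) × ⨁ i : ι, ZMod (p i ^ ex i)) :=
    (⊤ : AddSubgroup (Fin n →₀ ℤ)).prod ⊥ with hT
  set Na : AddSubgroup (Additive M) := T.comap e.toAddMonoidHom with hNa
  set N : Subgroup M := Subgroup.toAddSubgroup.symm Na with hN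
  have hmemN : ∀ x : M, x ∈ N ↔ Additive.ofMul x ∈ Na := fun x => Iff.rfl
  refine ⟨N, n, ?_, ?_⟩
  · intro x
    set t := (e (Additive.ofMul x)).2 with ht
    have htor : IsOfFinAddOrder t := isOfFinAddOrder_of_finite t
    obtain ⟨j, hj, hjt⟩ := (isOfFinAddOrder_iff_nsmul_eq_zero).mp htor
    refine ⟨j, hj, ?_⟩
    rw [hmemN]
    have : Additive.ofMul (x ^ j) = j • Additive.ofMul x := rfl
    rw [this]
    show e.toAddMonoidHom (j • Additive.ofMul x) ∈ T
    rw [map_nsmul]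
    constructor
    · exact AddSubgroup.mem_top _
    · show (j • e (Additive.ofMul x)).2 ∈ (⊥ : AddSubgroup _)
      have : (j • e (Additive.ofMul x)).2 = j • t := rfl
      rw [this, hjt]
      exact AddSubgroup.mem_bot.mpr rfl
  · -- build the equivalence
    have hmap : Na.map e.toAddMonoidHom = T :=
      AddSubgroup.map_comap_eq_self_of_surjective e.surjective T
    have e1 : ↥Na ≃+ ↥(Na.map e.toAddMonoidHom) := AddEquiv.addSubgroupMap e Na
    have e2 : ↥(Na.map e.toAddMonoidHom) ≃+ ↥T := by rw [hmap]
    have e3 : ↥T ≃+ (Fin n →₀ ℤ) := by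
      refine (AddSubgroup.prodEquiv _ _).trans ?_
      refine (AddEquiv.prodCongr AddSubgroup.topEquiv (AddEquiv.refl _)).trans ?_
      exact AddEquiv.prodUnique
    have e4 : (Fin n →₀ ℤ) ≃+ (Fin n → ℤ) := Finsupp.addEquivFunOnFinite
    have f : ↥Na ≃+ (Fin n → ℤ) := ((e1.trans e2).trans e3).trans e4
    refine ⟨?_⟩
    have g : ↥N ≃* Multiplicative ↥Na :=
      { toFun := fun x => Multiplicative.ofAdd (⟨Additive.ofMul (x : M), x.2⟩ : ↥Na)
        invFun := fun y => ⟨Additive.toMul ((y.toAdd : ↥Na) : Additive M), y.toAdd.2⟩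
        left_inv := fun x => rfl
        right_inv := fun y => rfl
        map_mul' := fun x y => rfl }
    exact g.trans (AddEquiv.toMultiplicative f)
theorem commensurator_eq_normalizer_of_central_extension
    {G Q : Type*} [Group G] [Group Q] (b : ℕ) (hb : 1 ≤ b)
    (θ : G →* Q) (hsurj : Function.Surjective θ)
    (hcentral : θ.ker ≤ Subgroup.center G)
    (hker : Nonempty (θ.ker ≃* Multiplicative (Fin b → ℤ)))
    (hQ : ∀ A : Subgroup Q, (∃ n : ℕ, Nonempty (A ≃* Multiplicative (Fin n → ℤ))) →
      ∃ A' : Subgroup Q, A' ≤ A ∧ (A'.subgroupOf A).FiniteIndex ∧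
        Subgroup.Commensurable.commensurator A' = Subgroup.normalizer (A' : Set Q)) :
    ∀ H : Subgroup G, (∃ n : ℕ, Nonempty (H ≃* Multiplicative (Fin n → ℤ))) →
      ∃ L : Subgroup G, Subgroup.Commensurable L H ∧
        Subgroup.Commensurable.commensurator L = Subgroup.normalizer (L : Set G) := by
  classical
  intro H hH
  obtain ⟨n, ⟨e⟩⟩ := hH
  obtain ⟨eb⟩ := hker
  -- basic facts about free abelian pieces
  have hfgMult : ∀ m : ℕ, Group.FG (Multiplicative (Fin m → ℤ)) := by
    intro m
    haveI : Module.Finite ℤ (Fin m → ℤ) := inferInstance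
    haveI : AddGroup.FG (Fin m → ℤ) := Module.Finite.iff_addGroup_fg.mp inferInstance
    infer_instance
  have hcommMult : ∀ (m : ℕ) (W : Subgroup G), (W ≃* Multiplicative (Fin m → ℤ)) →
      ∀ x y : G, x ∈ W → y ∈ W → x * y = y * x := by
    intro m W f x y hx hy
    have : f (⟨x, hx⟩ * ⟨y, hy⟩) = f (⟨y, hy⟩ * ⟨x, hx⟩) := by
      rw [map_mul, map_mul, mul_comm]
    have := f.injective this
    exact Subtype.ext_iff.mp this
  have hfgSub : ∀ (m : ℕ) (W : Subgroup G), (W ≃* Multiplicative (Fin m → ℤ)) →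
      Group.FG ↥W := by
    intro m W f
    haveI := hfgMult m
    exact Group.fg_of_surjective (f := f.symm.toMonoidHom) f.symm.surjective
  have hHcomm := hcommMult n H e
  have hHfg : Group.FG ↥H := hfgSub n H e
  have hkercomm := hcommMult b θ.ker eb
  have hkerfg : Group.FG ↥θ.ker := hfgSub b θ.ker eb
  -- torsion-freeness of the kernel
  have hkertf : ∀ x ∈ θ.ker, ∀ k : ℕ, 0 < k → x ^ k = 1 → x = 1 := by
    intro x hx k hk hxk
    have h1 : (eb ⟨x, hx⟩) ^ k = 1 := by
      rw [← map_pow]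
      have : (⟨x, hx⟩ : θ.ker) ^ k = 1 := by
        ext; simpa using hxk
      rw [this, map_one]
    have h2 : (k : ℤ) • (Multiplicative.toAdd (eb ⟨x, hx⟩)) = 0 := by
      have := congrArg Multiplicative.toAdd h1
      rw [toAdd_pow] at this
      rw [natCast_zsmul]
      simpa using this
    have h3 : Multiplicative.toAdd (eb ⟨x, hx⟩) = 0 := by
      rcases smul_eq_zero.mp h2 with h | h
      · exact absurd (by exact_mod_cast h) hk.ne'
      · exact h
    have h4 : eb ⟨x, hx⟩ = 1 := by
      have : eb ⟨x, hx⟩ = Multiplicative.ofAdd 0 := by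
        rw [← h3]; rfl
      simpa using this
    have h5 : (⟨x, hx⟩ : θ.ker) = 1 := by
      apply eb.injective; rw [h4, map_one]
    exact Subtype.ext_iff.mp h5
  -- the image M = θ(H)
  set M : Subgroup Q := H.map θ with hM
  have hMfg : Group.FG ↥M := by
    have hrange : (θ.comp H.subtype).range = M := by
      rw [MonoidHom.range_comp, Subgroup.range_subtype]
    haveI := hHfg
    have : Group.FG ↥(θ.comp H.subtype).range := inferInstance
    rwa [hrange] at this
  have hMcomm : ∀ x y : Q, x ∈ M → y ∈ M → x * y = y * x := by
    rintro _ _ ⟨u, hu, rfl⟩ ⟨v, hv, rfl⟩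
    rw [← map_mul, ← map_mul, hHcomm u v hu hv]
  letI : CommGroup ↥M :=
    { (inferInstance : Group ↥M) with
      mul_comm := fun a b => Subtype.ext (hMcomm a b a.2 b.2) }
  haveI : Group.FG ↥M := hMfg
  -- free cofinite subgroup A of M
  obtain ⟨N, k, hNtor, ⟨eN⟩⟩ := aux_free_cofinite_subgroup ↥M
  set A : Subgroup Q := N.map M.subtype with hA
  have hAM : A ≤ M := Subgroup.map_subtype_le N
  have eA : ↥A ≃* Multiplicative (Fin k → ℤ) :=
    ((Subgroup.equivMapOfInjective N M.subtype M.subtype_injective).symm).trans eN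
  have hArel : A.relIndex M ≠ 0 := by
    have h1 : A.subgroupOf M = N :=
      Subgroup.comap_map_eq_self_of_injective M.subtype_injective N
    have h2 : A.relIndex M = N.index := by rw [Subgroup.relIndex, h1]
    rw [h2]
    exact aux_index_ne_zero N hNtor
  -- apply the hypothesis on Q
  obtain ⟨A', hA'le, hA'fi, hA'comm⟩ := hQ A ⟨k, ⟨eA⟩⟩
  have hA'M : A' ≤ M := hA'le.trans hAM
  have hA'relM : A'.relIndex M ≠ 0 := by
    rw [← Subgroup.relIndex_mul_relIndex A' A M hA'le hAM]
    exact Nat.mul_ne_zero hA'fi.index_ne_zero hArel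
  have hA'commEl : ∀ x y : Q, x ∈ A' → y ∈ A' → x * y = y * x :=
    fun x y hx hy => hMcomm x y (hA'M hx) (hA'M hy)
  -- the subgroups Ḡ = θ⁻¹(A') and K = H ⊓ Ḡ
  set Gbar : Subgroup G := A'.comap θ with hGbar
  set K : Subgroup G := H ⊓ Gbar with hK
  -- elements of the isolator commute
  have hscomm : ∀ x y : G,
      (x ∈ Gbar ∧ ∃ j : ℕ, 0 < j ∧ x ^ j ∈ K) →
      (y ∈ Gbar ∧ ∃ j : ℕ, 0 < j ∧ y ^ j ∈ K) → x * y = y * x := by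
    rintro x y ⟨hxG, a, ha, hxa⟩ ⟨hyG, m, hm, hym⟩
    have hθx : θ x ∈ A' := hxG
    have hθy : θ y ∈ A' := hyG
    have hcker : x * y * x⁻¹ * y⁻¹ ∈ θ.ker := by
      rw [MonoidHom.mem_ker]
      simp only [map_mul, map_inv]
      rw [hA'commEl (θ x) (θ y) hθx hθy]
      group
    have c_comm : ∀ z : G, Commute (x * y * x⁻¹ * y⁻¹) z := fun z =>
      ((Subgroup.mem_center_iff.mp (hcentral hcker)) z).symm
    have hpow : x ^ a * y ^ m = y ^ m * x ^ a :=
      hHcomm _ _ (hxa.1) (hym.1)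
    exact aux_comm_of_powers ha hm c_comm hpow
      (fun j hj hcj => hkertf _ hcker j hj hcj)
  -- the isolator subgroup L
  set L : Subgroup G :=
    { carrier := {x : G | x ∈ Gbar ∧ ∃ j : ℕ, 0 < j ∧ x ^ j ∈ K}
      one_mem' := ⟨one_mem _, 1, one_pos, by simpa using one_mem K⟩
      inv_mem' := by
        rintro x ⟨hxG, j, hj, hxj⟩
        exact ⟨inv_mem hxG, j, hj, by rw [inv_pow]; exact inv_mem hxj⟩
      mul_mem' := by
        rintro x y hx hy
        obtain ⟨hxG, a, ha, hxa⟩ := hx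
        obtain ⟨hyG, m, hm, hym⟩ := hy
        have hcomm : Commute x y := hscomm x y ⟨hxG, a, ha, hxa⟩ ⟨hyG, m, hm, hym⟩
        refine ⟨mul_mem hxG hyG, a * m, Nat.mul_pos ha hm, ?_⟩
        rw [hcomm.mul_pow]
        have h1 : x ^ (a * m) ∈ K := by rw [pow_mul]; exact pow_mem hxa m
        have h2 : y ^ (a * m) ∈ K := by rw [mul_comm a m, pow_mul]; exact pow_mem hym a
        exact mul_mem h1 h2 } with hL
  have hmemL : ∀ x : G, x ∈ L ↔ x ∈ Gbar ∧ ∃ j : ℕ, 0 < j ∧ x ^ j ∈ K := fun _ => Iff.rfl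
  have hKL : K ≤ L := fun x hx => ⟨hx.2, 1, one_pos, by rwa [pow_one]⟩
  have hLG : L ≤ Gbar := fun x hx => hx.1
  have hLcomm : ∀ x y : G, x ∈ L → y ∈ L → x * y = y * x :=
    fun x y hx hy => hscomm x y ((hmemL x).mp hx) ((hmemL y).mp hy)
  have hinf : L ⊓ H = K := by
    apply le_antisymm
    · rintro x ⟨hxL, hxH⟩
      exact ⟨hxH, ((hmemL x).mp hxL).1⟩
    · exact le_inf hKL inf_le_left
  -- image computations
  have hmapK : K.map θ = A' := by
    apply le_antisymm
    · rintro _ ⟨x, ⟨_, hxG⟩, rfl⟩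
      exact hxG
    · intro q hq
      obtain ⟨h, hh, rfl⟩ := hA'M hq
      exact ⟨h, ⟨hh, Subgroup.mem_comap.mpr hq⟩, rfl⟩
  have hmapL : L.map θ = A' := by
    apply le_antisymm
    · exact Subgroup.map_le_iff_le_comap.mpr hLG
    · rw [← hmapK]
      exact Subgroup.map_mono hKL
  -- commensurability of L and H
  have hLrelH : L.relIndex H ≠ 0 := by
    have h1 : L.relIndex H = K.relIndex H := by
      rw [← Subgroup.inf_relIndex_right L H, hinf]
    have h2 : K.relIndex H = Gbar.relIndex H := by
      rw [hK, inf_comm, Subgroup.inf_relIndex_right]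
    rw [h1, h2, hGbar, Subgroup.relIndex_comap]
    exact hA'relM
  letI : CommGroup ↥L :=
    { (inferInstance : Group ↥L) with
      mul_comm := fun a b => Subtype.ext (hLcomm a b a.2 b.2) }
  have hLfg : Group.FG ↥L := by
    apply aux_fg_of_ker_range (θ.comp L.subtype)
    · -- kernel is fg
      have hkereq : (θ.comp L.subtype).ker = (θ.ker ⊓ L).subgroupOf L := by
        rw [← MonoidHom.comap_ker, Subgroup.inf_subgroupOf_right]
        rfl
      rw [hkereq]
      have hfg1 : Group.FG ↥(θ.ker ⊓ L) :=
        aux_fg_subgroup_of_le inf_le_left hkercomm hkerfg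
      exact Group.fg_of_surjective
        (f := (Subgroup.subgroupOfEquivOfLe (inf_le_right : θ.ker ⊓ L ≤ L)).symm.toMonoidHom)
        (Subgroup.subgroupOfEquivOfLe _).symm.surjective
    · -- range is fg
      have hrangeeq : (θ.comp L.subtype).range = A' := by
        rw [MonoidHom.range_comp, Subgroup.range_subtype, hmapL]
      rw [hrangeeq]
      exact aux_fg_subgroup_of_le hA'M hMcomm hMfg
  haveI := hLfg
  have hHrelL : H.relIndex L ≠ 0 := by
    have h1 : H.relIndex L = K.relIndex L := by
      rw [← Subgroup.inf_relIndex_right H L, inf_comm, hinf]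
    rw [h1]
    have : K.relIndex L = (K.subgroupOf L).index := rfl
    rw [this]
    apply aux_index_ne_zero
    rintro ⟨x, hxL⟩
    obtain ⟨_, j, hj, hxj⟩ := (hmemL x).mp hxL
    refine ⟨j, hj, ?_⟩
    rw [Subgroup.mem_subgroupOf]
    simpa using hxj
  refine ⟨L, ⟨hLrelH, hHrelL⟩, ?_⟩
  -- commensurator = normalizer
  apply le_antisymm
  · -- commensurator ≤ normalizer
    have conj_mem : ∀ g ∈ Commensurable.commensurator L, ∀ x ∈ L, g * x * g⁻¹ ∈ L := by
      intro g hg x hx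
      have hcg : Commensurable (ConjAct.toConjAct g • L) L :=
        (Commensurable.commensurator_mem_iff L g).mp hg
      set q : Q := θ g with hq
      have hmapconj : (ConjAct.toConjAct g • L).map θ = ConjAct.toConjAct q • A' := by
        ext y
        rw [Subgroup.mem_map, aux_mem_conj]
        constructor
        · rintro ⟨x', hx', rfl⟩
          rw [aux_mem_conj g x' L] at hx'
          rw [← hmapL]
          refine ⟨g⁻¹ * x' * g, hx', ?_⟩
          simp only [map_mul, map_inv, hq]
        · intro hy
          rw [← hmapL] at hy
          obtain ⟨w, hw, hww⟩ := hy
          refine ⟨g * w * g⁻¹, ?_, ?_⟩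
          · rw [aux_mem_conj]
            have heq : g⁻¹ * (g * w * g⁻¹) * g = w := by group
            rw [heq]; exact hw
          · simp only [map_mul, map_inv, hww, hq]
            group
      have hqcomm : q ∈ Commensurable.commensurator A' := by
        rw [Commensurable.commensurator_mem_iff]
        constructor
        · have h1 : (ConjAct.toConjAct g • L) ≤ (ConjAct.toConjAct q • A').comap θ := by
            intro x' hx'
            rw [Subgroup.mem_comap, ← hmapconj]
            exact Subgroup.mem_map_of_mem θ hx'
          have h2 := Subgroup.relIndex_dvd_of_le_left (L := L) h1
          have h3 : ((ConjAct.toConjAct q • A').comap θ).relIndex L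
              = (ConjAct.toConjAct q • A').relIndex (L.map θ) :=
            Subgroup.relIndex_comap (H := ConjAct.toConjAct q • A') θ L
          rw [hmapL] at h3
          rw [← h3]
          exact fun h0 => hcg.1 (Nat.eq_zero_of_zero_dvd (h0 ▸ h2))
        · have h1 : L ≤ (A'.comap θ) := hLG
          have h2 := Subgroup.relIndex_dvd_of_le_left (L := ConjAct.toConjAct g • L) h1
          have h3 : (A'.comap θ).relIndex (ConjAct.toConjAct g • L)
              = A'.relIndex ((ConjAct.toConjAct g • L).map θ) :=
            Subgroup.relIndex_comap (H := A') θ (ConjAct.toConjAct g • L)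
          rw [hmapconj] at h3
          rw [← h3]
          exact fun h0 => hcg.2 (Nat.eq_zero_of_zero_dvd (h0 ▸ h2))
      have hqnorm : q ∈ Subgroup.normalizer (A' : Set Q) := hA'comm ▸ hqcomm
      refine ⟨?_, ?_⟩
      · rw [Subgroup.mem_comap]
        have hθx : θ x ∈ A' := hx.1
        have h5 := (Subgroup.mem_normalizer_iff.mp hqnorm (θ x)).mp hθx
        simpa only [map_mul, map_inv, hq] using h5
      · have hy : g * x * g⁻¹ ∈ ConjAct.toConjAct g • L := by
          rw [aux_mem_conj]
          have heq : g⁻¹ * (g * x * g⁻¹) * g = x := by group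
          rw [heq]; exact hx
        obtain ⟨j, hj, hjmem⟩ := aux_pow_mem_of_relIndex_ne_zero hy hcg.2
        obtain ⟨_, i, hi, him⟩ := (hmemL _).mp hjmem
        exact ⟨j * i, Nat.mul_pos hj hi, by rw [pow_mul]; exact him⟩
    intro g hg
    rw [Subgroup.mem_normalizer_iff]
    intro h
    constructor
    · intro hh; exact conj_mem g hg h hh
    · intro hh
      have := conj_mem g⁻¹ (inv_mem hg) _ hh
      have heq : g⁻¹ * (g * h * g⁻¹) * g⁻¹⁻¹ = h := by group
      rwa [heq] at this
  · -- normalizer ≤ commensurator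
    intro g hg
    rw [Commensurable.commensurator_mem_iff]
    have hconjL : ConjAct.toConjAct g • L = L := by
      ext x
      rw [aux_mem_conj]
      have := Subgroup.mem_normalizer_iff.mp hg (g⁻¹ * x * g)
      have heq : g * (g⁻¹ * x * g) * g⁻¹ = x := by group
      rw [heq] at this
      exact this
    rw [hconjL]
end

section
/- Let θ : G → Q be a group homomorphism whose kernel is contained in the center of G, and let L be a subgroup of G satisfying: (i) for every z in the kernel of θ, if z^n ∈ L for some n ≥ 1 then z ∈ L; and (ii) the commensurator of θ(L) in Q equals the normalizer of θ(L) in Q. Then the commensurator of L in G equals the normalizer of L in G, i.e. N_G[L] = N_G(L). -/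
open Subgroup Pointwise

lemma commensurable_map_aux {G Q : Type*} [Group G] [Group Q] (θ : G →* Q)
    {H K : Subgroup G} (h : Commensurable H K) :
    Commensurable (H.map θ) (K.map θ) := by
  constructor
  · have hle : H ≤ (H.map θ).comap θ := fun x hx => Subgroup.mem_comap.2 (mem_map_of_mem θ hx)
    have hdvd := Subgroup.relIndex_dvd_of_le_left K hle
    rw [Subgroup.relIndex_comap] at hdvd
    exact fun h0 => h.1 (by simpa [h0] using hdvd)
  · have hle : K ≤ (K.map θ).comap θ := fun x hx => Subgroup.mem_comap.2 (mem_map_of_mem θ hx)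
    have hdvd := Subgroup.relIndex_dvd_of_le_left H hle
    rw [Subgroup.relIndex_comap] at hdvd
    exact fun h0 => h.2 (by simpa [h0] using hdvd)

lemma map_conjAct_smul_aux {G Q : Type*} [Group G] [Group Q] (θ : G →* Q) (g : G)
    (L : Subgroup G) :
    (ConjAct.toConjAct g • L).map θ = ConjAct.toConjAct (θ g) • (L.map θ) := by
  ext q
  simp only [Subgroup.mem_map, Subgroup.mem_pointwise_smul_iff_inv_smul_mem,
    ← ConjAct.toConjAct_inv, ConjAct.toConjAct_smul, inv_inv]
  constructor
  · rintro ⟨x, hx, rfl⟩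
    exact ⟨g⁻¹ * x * g, hx, by simp [map_mul, mul_assoc]⟩
  · rintro ⟨x, hx, hxq⟩
    refine ⟨g * x * g⁻¹, by simpa [mul_assoc] using hx, ?_⟩
    simp [map_mul, hxq, mul_assoc]

theorem commensurator_eq_normalizer_of_map
    {G Q : Type*} [Group G] [Group Q] (θ : G →* Q)
    (hcentral : θ.ker ≤ Subgroup.center G) (L : Subgroup G)
    (hroot : ∀ z ∈ θ.ker, ∀ n : ℕ, 1 ≤ n → z ^ n ∈ L → z ∈ L)
    (himg : Subgroup.Commensurable.commensurator (L.map θ) = Subgroup.normalizer ((L.map θ : Subgroup Q) : Set Q)) :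
    Subgroup.Commensurable.commensurator L = Subgroup.normalizer (L : Set G) := by
  have key : ∀ g ∈ Commensurable.commensurator L, ∀ x ∈ L, g * x * g⁻¹ ∈ L := by
    intro g hg x hx
    have hcomm : Commensurable (ConjAct.toConjAct g • L) L :=
      (Commensurable.commensurator_mem_iff L g).1 hg
    -- θ g is in the commensurator, hence normalizer, of L.map θ
    have hmap : Commensurable (ConjAct.toConjAct (θ g) • (L.map θ)) (L.map θ) := by
      have := commensurable_map_aux θ hcomm
      rwa [map_conjAct_smul_aux] at this
    have hnorm : θ g ∈ Subgroup.normalizer ((L.map θ : Subgroup Q) : Set Q) := by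
      rw [← himg]; exact (Commensurable.commensurator_mem_iff (L.map θ) (θ g)).2 hmap
    -- θ (g x g⁻¹) ∈ L.map θ
    have hmem : θ (g * x * g⁻¹) ∈ L.map θ := by
      have := (Subgroup.mem_normalizer_iff.1 hnorm (θ x)).1 (mem_map_of_mem θ hx)
      simpa [map_mul] using this
    obtain ⟨y, hy, hyeq⟩ := hmem
    -- z := y⁻¹ * (g x g⁻¹) is in ker θ, hence central
    set a := g * x * g⁻¹ with ha
    set z := y⁻¹ * a with hz
    have hzker : z ∈ θ.ker := by
      simp [MonoidHom.mem_ker, hz, map_mul, hyeq]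
    have hzc : z ∈ Subgroup.center G := hcentral hzker
    -- some power of a lies in L
    have haL : a ∈ ConjAct.toConjAct g • L := by
      have := Subgroup.smul_mem_pointwise_smul x (ConjAct.toConjAct g) L hx
      rwa [ConjAct.toConjAct_smul] at this
    obtain ⟨n, hn0, _, hnmem⟩ :=
      Subgroup.exists_pow_mem_of_relIndex_ne_zero hcomm.2 haL
    have hanL : a ^ n ∈ L := hnmem.1
    -- a = y * z with z central, so a^n = y^n * z^n
    have haz : a = y * z := by simp [hz, mul_assoc]
    have hcom : Commute y z := (Subgroup.mem_center_iff.1 hzc) y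
    have hpow : a ^ n = y ^ n * z ^ n := by rw [haz, hcom.mul_pow]
    have hznL : z ^ n ∈ L := by
      have : z ^ n = (y ^ n)⁻¹ * a ^ n := by rw [hpow]; group
      rw [this]
      exact mul_mem (inv_mem (pow_mem hy n)) hanL
    have hzL : z ∈ L := hroot z hzker n hn0 hznL
    rw [haz]
    exact mul_mem hy hzL
  apply le_antisymm
  · intro g hg
    rw [Subgroup.mem_normalizer_iff]
    intro h
    constructor
    · exact fun hh => key g hg h hh
    · intro hh
      have := key g⁻¹ (inv_mem hg) _ hh
      simpa [mul_assoc] using this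
  · intro g hg
    rw [Commensurable.commensurator_mem_iff]
    have : ConjAct.toConjAct g • L = L := by
      ext x
      rw [Subgroup.mem_pointwise_smul_iff_inv_smul_mem, ← ConjAct.toConjAct_inv,
        ConjAct.toConjAct_smul]
      simp only [Subgroup.mem_pointwise_smul_iff_inv_smul_mem, ← ConjAct.toConjAct_inv,
        ConjAct.toConjAct_smul, inv_inv]
      exact (Subgroup.mem_normalizer_iff''.1 hg x).symm
    rw [this]
end
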